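/- Let Σ be a finite signature and K a finite set of finite Σ-models. Then GCI(Cv(K)), the set of GCIs holding in all models of the complete covariety generated by K, is finitely based: there is a finite set T of GCIs sound and complete for Cv(K). -/

import Mathlib

/-- ALC concept descriptions over concept names `NC` and role names `NR`. -/
inductive ALCConcept (NC NR : Type) : Type
  | bot : ALCConcept NC NR
  | top : ALCConcept NC NR
  | atom : NC → ALCConcept NC NR
  | inf : ALCConcept NC NR → ALCConcept NC NR → ALCConcept NC NR
  | sup : ALCConcept NC NR → ALCConcept NC NR → ALCConcept NC NR
  | compl : ALCConcept NC NR → ALCConcept NC NR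
  | all : NR → ALCConcept NC NR → ALCConcept NC NR
  | ex : NR → ALCConcept NC NR → ALCConcept NC NR

/-- A Σ-model: nonempty carrier, interpretation of concept and role names. -/
structure ALCModel (NC NR : Type) : Type 1 where
  Δ : Type
  nonempty : Nonempty Δ
  ic : NC → Set Δ
  ir : NR → Set (Δ × Δ)

/-- Standard ALC evaluation of a concept in a model. -/
def ALCModel.eval {NC NR : Type} (I : ALCModel NC NR) : ALCConcept NC NR → Set I.Δ
  | .bot => ∅
  | .top => Set.univ
  | .atom c => I.ic c
  | .inf C D => I.eval C ∩ I.eval D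
  | .sup C D => I.eval C ∪ I.eval D
  | .compl C => (I.eval C)ᶜ
  | .all r C => {x | ∀ y, (x, y) ∈ I.ir r → y ∈ I.eval C}
  | .ex r C => {x | ∃ y, (x, y) ∈ I.ir r ∧ y ∈ I.eval C}

/-- Satisfaction of a GCI `C ⊑ D`. -/
def ALCModel.Sat {NC NR : Type} (I : ALCModel NC NR) (C D : ALCConcept NC NR) : Prop :=
  I.eval C ⊆ I.eval D

/-- ALC morphism (functional bisimulation) between models. -/
def IsMorphism {NC NR : Type} (I I' : ALCModel NC NR) (μ : I.Δ → I'.Δ) : Prop :=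
  (∀ c a, a ∈ I.ic c ↔ μ a ∈ I'.ic c) ∧
  (∀ r a b, (a, b) ∈ I.ir r → (μ a, μ b) ∈ I'.ir r) ∧
  (∀ r a a', (μ a, a') ∈ I'.ir r → ∃ b, (a, b) ∈ I.ir r ∧ μ b = a')

/-- Coproduct (disjoint union) of a family of models. -/
def Coproduct {NC NR Λ : Type} [Nonempty Λ] (F : Λ → ALCModel NC NR) : ALCModel NC NR where
  Δ := Σ i, (F i).Δ
  nonempty := ⟨⟨Classical.arbitrary Λ, (F _).nonempty.some⟩⟩
  ic c := {p | p.2 ∈ (F p.1).ic c}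
  ir r := {p | ∃ (i : Λ) (a b : (F i).Δ), (a, b) ∈ (F i).ir r ∧ p.1 = ⟨i, a⟩ ∧ p.2 = ⟨i, b⟩}

/-- `C ⊑ D` is a semantical consequence of the set of GCIs `T`. -/
def Consequence {NC NR : Type} (T : Set (ALCConcept NC NR × ALCConcept NC NR))
    (C D : ALCConcept NC NR) : Prop :=
  ∀ J : ALCModel NC NR, (∀ φ ∈ T, J.Sat φ.1 φ.2) → J.Sat C D

/-- Closure under morphism domains, homomorphic images and coproducts. -/
def IsCompleteCovariety {NC NR : Type} (Cl : Set (ALCModel NC NR)) : Prop :=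
  (∀ I I' : ALCModel NC NR, I' ∈ Cl → (∃ μ : I.Δ → I'.Δ, IsMorphism I I' μ) → I ∈ Cl) ∧
  (∀ I I' : ALCModel NC NR, I ∈ Cl →
    (∃ μ : I.Δ → I'.Δ, IsMorphism I I' μ ∧ Function.Surjective μ) → I' ∈ Cl) ∧
  (∀ (Λ : Type) (_ : Nonempty Λ) (F : Λ → ALCModel NC NR),
    (∀ i, F i ∈ Cl) → Coproduct F ∈ Cl)

/-- The complete covariety generated by a class `K`. -/
def CvGen {NC NR : Type} (K : Set (ALCModel NC NR)) : Set (ALCModel NC NR) :=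
  ⋂₀ {Cl : Set (ALCModel NC NR) | K ⊆ Cl ∧ IsCompleteCovariety Cl}

/-- rank (modal depth) of a concept -/
def rankC {NC NR : Type} : ALCConcept NC NR → ℕ
  | .bot => 0
  | .top => 0
  | .atom _ => 0
  | .inf C D => max (rankC C) (rankC D)
  | .sup C D => max (rankC C) (rankC D)
  | .compl C => rankC C
  | .all _ C => rankC C + 1
  | .ex _ C => rankC C + 1
/-- the space of rank-k types -/
def Ty (NC NR : Type) : ℕ → Type
  | 0 => Set NC
  | k+1 => Set NC × (NR → Set (Ty NC NR k))

instance Ty.finite (NC NR : Type) [Finite NC] [Finite NR] : ∀ k, Finite (Ty NC NR k)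
  | 0 => by unfold Ty; infer_instance
  | k+1 => by have := Ty.finite NC NR k; unfold Ty; infer_instance

/-- the rank-k type of an element in a model -/
def ty {NC NR : Type} (I : ALCModel NC NR) : ∀ k, I.Δ → Ty NC NR k :=
  Nat.rec (motive := fun k => I.Δ → Ty NC NR k)
    (fun x => ({c | x ∈ I.ic c} : Set NC))
    (fun k ih x => (({c | x ∈ I.ic c} : Set NC),
      fun r => ({t | ∃ y, (x, y) ∈ I.ir r ∧ ih y = t} : Set (Ty NC NR k))))

/-- projection from rank-(k+1) types to rank-k types -/
def tyProj (NC NR : Type) : ∀ k, Ty NC NR (k+1) → Ty NC NR k :=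
  Nat.rec (motive := fun k => Ty NC NR (k+1) → Ty NC NR k)
    (fun t => (t : Set NC × (NR → Set (Ty NC NR 0))).1)
    (fun k ih t => ((t : Set NC × (NR → Set (Ty NC NR (k+1)))).1, fun r => ih '' t.2 r))

lemma ty_zero_def {NC NR : Type} (I : ALCModel NC NR) (x : I.Δ) :
    ty I 0 x = ({c | x ∈ I.ic c} : Set NC) := rfl

lemma ty_succ_def {NC NR : Type} (I : ALCModel NC NR) (k : ℕ) (x : I.Δ) :
    ty I (k+1) x = ((({c | x ∈ I.ic c} : Set NC),
      fun r => ({t | ∃ y, (x, y) ∈ I.ir r ∧ ty I k y = t} : Set (Ty NC NR k))) :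
        Set NC × (NR → Set (Ty NC NR k))) := rfl
lemma tyProj_ty {NC NR : Type} (I : ALCModel NC NR) :
    ∀ k (x : I.Δ), tyProj NC NR k (ty I (k+1) x) = ty I k x
  | 0, x => rfl
  | k+1, x => by
      show (_, _) = ((_, _) : Set NC × (NR → Set (Ty NC NR k)))
      refine Prod.ext rfl ?_
      funext r
      ext t
      constructor
      · rintro ⟨t', ⟨y, hy, rfl⟩, rfl⟩
        exact ⟨y, hy, (tyProj_ty I k y).symm⟩
      · rintro ⟨y, hy, rfl⟩
        exact ⟨ty I (k+1) y, ⟨y, hy, rfl⟩, tyProj_ty I k y⟩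

lemma ty_eq_succ {NC NR : Type} {I J : ALCModel NC NR} {k : ℕ} {x : I.Δ} {y : J.Δ}
    (h : ty I (k+1) x = ty J (k+1) y) : ty I k x = ty J k y := by
  rw [← tyProj_ty I k x, ← tyProj_ty J k y, h]

lemma ty_eq_of_le {NC NR : Type} {I J : ALCModel NC NR} {k k' : ℕ} (hk : k' ≤ k)
    {x : I.Δ} {y : J.Δ} (h : ty I k x = ty J k y) : ty I k' x = ty J k' y := by
  induction k with
  | zero => obtain rfl : k' = 0 := Nat.le_zero.mp hk; exact h
  | succ n ih =>
      rcases Nat.lt_succ_iff_lt_or_eq.mp (Nat.lt_succ_of_le hk) with h' | rfl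
      · exact ih (Nat.lt_succ_iff.mp h') (ty_eq_succ h)
      · exact h

lemma ty_step_iff {NC NR : Type} {I J : ALCModel NC NR} {k : ℕ} {x : I.Δ} {y : J.Δ} :
    ty I (k+1) x = ty J (k+1) y ↔
      (({c | x ∈ I.ic c} : Set NC) = {c | y ∈ J.ic c} ∧
       ∀ r, ({t | ∃ x', (x, x') ∈ I.ir r ∧ ty I k x' = t} : Set (Ty NC NR k))
          = {t | ∃ y', (y, y') ∈ J.ir r ∧ ty J k y' = t}) := by
  rw [ty_succ_def, ty_succ_def]
  show (_ : Set NC × (NR → Set (Ty NC NR k))) = _ ↔ _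
  rw [Prod.ext_iff]
  simp [funext_iff]

/-- atoms are determined by the rank-k type -/
lemma ty_atoms_eq {NC NR : Type} {I J : ALCModel NC NR} {k : ℕ} {x : I.Δ} {y : J.Δ}
    (h : ty I k x = ty J k y) : ({c | x ∈ I.ic c} : Set NC) = {c | y ∈ J.ic c} := by
  have h0 : ty I 0 x = ty J 0 y := ty_eq_of_le (Nat.zero_le k) h
  rw [ty_zero_def, ty_zero_def] at h0
  exact h0
/-- evaluation of a concept is determined by the type of sufficiently high rank -/
lemma eval_iff_of_ty_eq {NC NR : Type} :
    ∀ (C : ALCConcept NC NR) (k : ℕ), rankC C ≤ k →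
      ∀ {I J : ALCModel NC NR} (x : I.Δ) (y : J.Δ),
        ty I k x = ty J k y → (x ∈ I.eval C ↔ y ∈ J.eval C) := by
  intro C
  induction C with
  | bot => intro k _ I J x y _; simp [ALCModel.eval]
  | top => intro k _ I J x y _; simp [ALCModel.eval]
  | atom c =>
      intro k _ I J x y h
      have := ty_atoms_eq h
      simp only [ALCModel.eval]
      constructor
      · intro hx; exact (Set.ext_iff.mp this c).mp hx
      · intro hy; exact (Set.ext_iff.mp this c).mpr hy
  | inf C D ihC ihD =>
      intro k hk I J x y h
      simp only [ALCModel.eval, Set.mem_inter_iff]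
      rw [ihC k (le_trans (le_max_left _ _) hk) x y h,
          ihD k (le_trans (le_max_right _ _) hk) x y h]
  | sup C D ihC ihD =>
      intro k hk I J x y h
      simp only [ALCModel.eval, Set.mem_union]
      rw [ihC k (le_trans (le_max_left _ _) hk) x y h,
          ihD k (le_trans (le_max_right _ _) hk) x y h]
  | compl C ihC =>
      intro k hk I J x y h
      simp only [ALCModel.eval, Set.mem_compl_iff]
      rw [ihC k hk x y h]
  | all r C ihC =>
      intro k hk I J x y h
      obtain ⟨m, rfl⟩ : ∃ m, k = m + 1 := by
        cases k with
        | zero => exact absurd hk (by simp [rankC])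
        | succ m => exact ⟨m, rfl⟩
      have hm : rankC C ≤ m := by
        have : rankC C + 1 ≤ m + 1 := hk
        omega
      obtain ⟨-, hsucc⟩ := ty_step_iff.mp h
      simp only [ALCModel.eval, Set.mem_setOf_eq]
      constructor
      · intro hx y' hy'
        have : ty J m y' ∈ {t | ∃ x', (x, x') ∈ I.ir r ∧ ty I m x' = t} :=
          (Set.ext_iff.mp (hsucc r) _).mpr ⟨y', hy', rfl⟩
        obtain ⟨x', hx', hty⟩ := this
        exact (ihC m hm x' y' hty).mp (hx x' hx')
      · intro hy x' hx'
        have : ty I m x' ∈ {t | ∃ y', (y, y') ∈ J.ir r ∧ ty J m y' = t} :=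
          (Set.ext_iff.mp (hsucc r) _).mp ⟨x', hx', rfl⟩
        obtain ⟨y', hy', hty⟩ := this
        exact (ihC m hm x' y' hty.symm).mpr (hy y' hy')
  | ex r C ihC =>
      intro k hk I J x y h
      obtain ⟨m, rfl⟩ : ∃ m, k = m + 1 := by
        cases k with
        | zero => exact absurd hk (by simp [rankC])
        | succ m => exact ⟨m, rfl⟩
      have hm : rankC C ≤ m := by
        have : rankC C + 1 ≤ m + 1 := hk
        omega
      obtain ⟨-, hsucc⟩ := ty_step_iff.mp h
      simp only [ALCModel.eval, Set.mem_setOf_eq]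
      constructor
      · rintro ⟨x', hx', hCx'⟩
        have : ty I m x' ∈ {t | ∃ y', (y, y') ∈ J.ir r ∧ ty J m y' = t} :=
          (Set.ext_iff.mp (hsucc r) _).mp ⟨x', hx', rfl⟩
        obtain ⟨y', hy', hty⟩ := this
        exact ⟨y', hy', (ihC m hm x' y' hty.symm).mp hCx'⟩
      · rintro ⟨y', hy', hCy'⟩
        have : ty J m y' ∈ {t | ∃ x', (x, x') ∈ I.ir r ∧ ty I m x' = t} :=
          (Set.ext_iff.mp (hsucc r) _).mpr ⟨y', hy', rfl⟩
        obtain ⟨x', hx', hty⟩ := this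
        exact ⟨x', hx', (ihC m hm x' y' hty).mpr hCy'⟩
/-- ALC concepts are invariant along morphisms -/
lemma eval_morphism {NC NR : Type} {I I' : ALCModel NC NR} {μ : I.Δ → I'.Δ}
    (hμ : IsMorphism I I' μ) :
    ∀ (C : ALCConcept NC NR) (x : I.Δ), x ∈ I.eval C ↔ μ x ∈ I'.eval C := by
  obtain ⟨hc, hfwd, hbwd⟩ := hμ
  intro C
  induction C with
  | bot => intro x; simp [ALCModel.eval]
  | top => intro x; simp [ALCModel.eval]
  | atom c => intro x; simpa [ALCModel.eval] using hc c x
  | inf C D ihC ihD => intro x; simp [ALCModel.eval, ihC x, ihD x]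
  | sup C D ihC ihD => intro x; simp [ALCModel.eval, ihC x, ihD x]
  | compl C ihC => intro x; simp [ALCModel.eval, ihC x]
  | all r C ihC =>
      intro x
      simp only [ALCModel.eval, Set.mem_setOf_eq]
      constructor
      · intro hx y' hy'
        obtain ⟨b, hb, rfl⟩ := hbwd r x y' hy'
        exact (ihC b).mp (hx b hb)
      · intro hx y hy
        exact (ihC y).mpr (hx (μ y) (hfwd r x y hy))
  | ex r C ihC =>
      intro x
      simp only [ALCModel.eval, Set.mem_setOf_eq]
      constructor
      · rintro ⟨y, hy, hCy⟩
        exact ⟨μ y, hfwd r x y hy, (ihC y).mp hCy⟩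
      · rintro ⟨y', hy', hCy'⟩
        obtain ⟨b, hb, rfl⟩ := hbwd r x y' hy'
        exact ⟨b, hb, (ihC b).mpr hCy'⟩

/-- The class of models of a single GCI is a complete covariety. -/
lemma isCompleteCovariety_sat {NC NR : Type} (C D : ALCConcept NC NR) :
    IsCompleteCovariety {I : ALCModel NC NR | I.Sat C D} := by
  refine ⟨?_, ?_, ?_⟩
  · rintro I I' hI' ⟨μ, hμ⟩ x hx
    exact (eval_morphism hμ D x).mpr (hI' ((eval_morphism hμ C x).mp hx))
  · rintro I I' hI ⟨μ, hμ, hsurj⟩ y hy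
    obtain ⟨x, rfl⟩ := hsurj y
    exact (eval_morphism hμ D x).mp (hI ((eval_morphism hμ C x).mpr hy))
  · intro Λ hΛ F hF p hp
    obtain ⟨i, a⟩ := p
    have hmor : IsMorphism (F i) (Coproduct F) (fun a => ⟨i, a⟩) := by
      refine ⟨fun c a => Iff.rfl, ?_, ?_⟩
      · intro r a b hab
        exact ⟨i, a, b, hab, rfl, rfl⟩
      · rintro r a a' ⟨i', a₂, b₂, hab, heq, rfl⟩
        injection heq with h1 h2
        subst h1
        cases eq_of_heq h2
        exact ⟨b₂, hab, rfl⟩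
    exact (eval_morphism hmor D a).mp (hF i ((eval_morphism hmor C a).mpr hp))

/-- K is contained in its generated covariety -/
lemma subset_cvGen {NC NR : Type} (K : Set (ALCModel NC NR)) : K ⊆ CvGen K :=
  fun I hI => Set.mem_sInter.mpr (fun _ hCl => hCl.1 hI)

/-- CvGen K is itself a complete covariety -/
lemma isCompleteCovariety_cvGen {NC NR : Type} (K : Set (ALCModel NC NR)) :
    IsCompleteCovariety (CvGen K) := by
  refine ⟨?_, ?_, ?_⟩
  · rintro I I' hI' hmor
    exact Set.mem_sInter.mpr fun Cl hCl => hCl.2.1 I I' (Set.mem_sInter.mp hI' Cl hCl) hmor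
  · rintro I I' hI hmor
    exact Set.mem_sInter.mpr fun Cl hCl => hCl.2.2.1 I I' (Set.mem_sInter.mp hI Cl hCl) hmor
  · intro Λ hΛ F hF
    exact Set.mem_sInter.mpr fun Cl hCl =>
      hCl.2.2.2 Λ hΛ F (fun i => Set.mem_sInter.mp (hF i) Cl hCl)

/-- if a GCI holds in every model of K, it holds in every model of CvGen K -/
lemma sat_cvGen_of_sat {NC NR : Type} {K : Set (ALCModel NC NR)} {C D : ALCConcept NC NR}
    (h : ∀ I ∈ K, I.Sat C D) : ∀ I ∈ CvGen K, I.Sat C D := by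
  intro I hI
  exact Set.mem_sInter.mp hI {J | J.Sat C D} ⟨h, isCompleteCovariety_sat C D⟩

/-- the injection into a coproduct is a morphism -/
lemma coproduct_inj_morphism {NC NR Λ : Type} [Nonempty Λ] (F : Λ → ALCModel NC NR) (i : Λ) :
    IsMorphism (F i) (Coproduct F) (fun a => ⟨i, a⟩) := by
  refine ⟨fun c a => Iff.rfl, ?_, ?_⟩
  · intro r a b hab
    exact ⟨i, a, b, hab, rfl, rfl⟩
  · rintro r a a' ⟨i', a₂, b₂, hab, heq, rfl⟩
    injection heq with h1 h2
    subst h1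
    cases eq_of_heq h2
    exact ⟨b₂, hab, rfl⟩
def bigInf {NC NR : Type} : List (ALCConcept NC NR) → ALCConcept NC NR
  | [] => .top
  | C :: l => .inf C (bigInf l)

def bigSup {NC NR : Type} : List (ALCConcept NC NR) → ALCConcept NC NR
  | [] => .bot
  | C :: l => .sup C (bigSup l)

lemma eval_bigInf {NC NR : Type} (I : ALCModel NC NR) (x : I.Δ) :
    ∀ l : List (ALCConcept NC NR), x ∈ I.eval (bigInf l) ↔ ∀ C ∈ l, x ∈ I.eval C
  | [] => by simp [bigInf, ALCModel.eval]
  | C :: l => by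
      simp only [bigInf, ALCModel.eval, Set.mem_inter_iff, List.mem_cons]
      rw [eval_bigInf I x l]
      constructor
      · rintro ⟨h1, h2⟩ D (rfl | hD)
        exacts [h1, h2 D hD]
      · intro h
        exact ⟨h C (Or.inl rfl), fun D hD => h D (Or.inr hD)⟩

lemma eval_bigSup {NC NR : Type} (I : ALCModel NC NR) (x : I.Δ) :
    ∀ l : List (ALCConcept NC NR), x ∈ I.eval (bigSup l) ↔ ∃ C ∈ l, x ∈ I.eval C
  | [] => by simp [bigSup, ALCModel.eval]
  | C :: l => by
      simp only [bigSup, ALCModel.eval, Set.mem_union, List.mem_cons]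
      rw [eval_bigSup I x l]
      constructor
      · rintro (h | ⟨D, hD, h⟩)
        exacts [⟨C, Or.inl rfl, h⟩, ⟨D, Or.inr hD, h⟩]
      · rintro ⟨D, (rfl | hD), h⟩
        exacts [Or.inl h, Or.inr ⟨D, hD, h⟩]

noncomputable def enumList (α : Type) [Finite α] : List α :=
  (@Finset.univ α (Fintype.ofFinite α)).toList

lemma mem_enumList {α : Type} [Finite α] (a : α) : a ∈ enumList α := by
  unfold enumList
  rw [Finset.mem_toList]
  exact @Finset.mem_univ α (Fintype.ofFinite α) a

open Classical in
/-- characteristic concept for a set of atoms -/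
noncomputable def chiAtoms {NC NR : Type} [Finite NC] (A : Set NC) : ALCConcept NC NR :=
  bigInf ((enumList NC).map (fun c => if c ∈ A then .atom c else .compl (.atom c)))

lemma eval_chiAtoms {NC NR : Type} [Finite NC] (A : Set NC) (I : ALCModel NC NR) (x : I.Δ) :
    x ∈ I.eval (chiAtoms A) ↔ ({c | x ∈ I.ic c} : Set NC) = A := by
  unfold chiAtoms
  rw [eval_bigInf]
  simp only [List.mem_map]
  constructor
  · intro h
    ext c
    have := h _ ⟨c, mem_enumList c, rfl⟩
    by_cases hc : c ∈ A <;> simp [hc, ALCModel.eval] at this <;> simp [hc, this]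
  · rintro rfl
    rintro C ⟨c, -, rfl⟩
    by_cases hc : x ∈ I.ic c <;> simp [hc, ALCModel.eval]

open Classical in
/-- characteristic concept of a rank-k type -/
noncomputable def chi {NC NR : Type} [Finite NC] [Finite NR] :
    ∀ k, Ty NC NR k → ALCConcept NC NR :=
  Nat.rec (motive := fun k => Ty NC NR k → ALCConcept NC NR)
    (fun A => chiAtoms (A : Set NC))
    (fun k ih t =>
      .inf (chiAtoms (t : Set NC × (NR → Set (Ty NC NR k))).1)
        (bigInf ((enumList NR).map (fun r =>
          .inf (bigInf ((enumList (Ty NC NR k)).map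
                 (fun s => if s ∈ (t : Set NC × (NR → Set (Ty NC NR k))).2 r
                           then .ex r (ih s) else .top)))
               (.all r (bigSup ((enumList (Ty NC NR k)).map
                 (fun s => if s ∈ (t : Set NC × (NR → Set (Ty NC NR k))).2 r
                           then ih s else .bot))))))))
lemma chi_eval {NC NR : Type} [Finite NC] [Finite NR] :
    ∀ (k : ℕ) (t : Ty NC NR k) (J : ALCModel NC NR) (x : J.Δ),
      x ∈ J.eval (chi k t) ↔ ty J k x = t := by
  intro k
  induction k with
  | zero =>
      intro t J x
      show x ∈ J.eval (chiAtoms (t : Set NC)) ↔ _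
      refine (eval_chiAtoms t J x).trans ?_
      exact Iff.rfl
  | succ k ih =>
      intro t J x
      obtain ⟨A, f, rfl⟩ : ∃ (A : Set NC) (f : NR → Set (Ty NC NR k)),
          t = ((A, f) : Set NC × (NR → Set (Ty NC NR k))) := ⟨_, _, rfl⟩
      have main : x ∈ J.eval (chi (k+1) ((A, f) : Set NC × (NR → Set (Ty NC NR k)))) ↔
          (({c | x ∈ J.ic c} : Set NC) = A ∧
           ∀ r, (∀ s ∈ f r, ∃ y, (x, y) ∈ J.ir r ∧ ty J k y = s) ∧
                (∀ y, (x, y) ∈ J.ir r → ty J k y ∈ f r)) := by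
        show x ∈ J.eval (.inf (chiAtoms A) (bigInf _)) ↔ _
        simp only [ALCModel.eval, Set.mem_inter_iff]
        rw [eval_chiAtoms, eval_bigInf]
        refine and_congr Iff.rfl ?_
        constructor
        · intro h r
          have hr := h _ (List.mem_map.mpr ⟨r, mem_enumList r, rfl⟩)
          simp only [ALCModel.eval, Set.mem_inter_iff] at hr
          obtain ⟨h1, h2⟩ := hr
          constructor
          · intro s hs
            rw [eval_bigInf] at h1
            have := h1 _ (List.mem_map.mpr ⟨s, mem_enumList s, rfl⟩)
            rw [if_pos hs] at this
            simp only [ALCModel.eval, Set.mem_setOf_eq] at this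
            obtain ⟨y, hy, hyc⟩ := this
            exact ⟨y, hy, (ih s J y).mp hyc⟩
          · intro y hy
            simp only [ALCModel.eval, Set.mem_setOf_eq] at h2
            have := h2 y hy
            rw [eval_bigSup] at this
            obtain ⟨C, hC, hyC⟩ := this
            obtain ⟨s, -, rfl⟩ := List.mem_map.mp hC
            by_cases hs : s ∈ f r
            · rw [if_pos hs] at hyC
              rwa [(ih s J y).mp hyC]
            · rw [if_neg hs] at hyC
              simp [ALCModel.eval] at hyC
        · intro h C hC
          obtain ⟨r, -, rfl⟩ := List.mem_map.mp hC
          obtain ⟨h1, h2⟩ := h r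
          simp only [ALCModel.eval, Set.mem_inter_iff, Set.mem_setOf_eq]
          constructor
          · rw [eval_bigInf]
            intro C' hC'
            obtain ⟨s, -, rfl⟩ := List.mem_map.mp hC'
            by_cases hs : s ∈ f r
            · rw [if_pos hs]
              obtain ⟨y, hy, hty⟩ := h1 s hs
              simp only [ALCModel.eval, Set.mem_setOf_eq]
              exact ⟨y, hy, (ih s J y).mpr hty⟩
            · rw [if_neg hs]
              simp [ALCModel.eval]
          · intro y hy
            rw [eval_bigSup]
            refine ⟨_, List.mem_map.mpr ⟨ty J k y, mem_enumList _, rfl⟩, ?_⟩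
            rw [if_pos (h2 y hy)]
            exact (ih _ J y).mpr rfl
      rw [main, ty_succ_def]
      show _ ↔ ((_ : Set NC × (NR → Set (Ty NC NR k))) = _)
      rw [show (((({c | x ∈ J.ic c} : Set NC),
          fun r => ({t | ∃ y, (x, y) ∈ J.ir r ∧ ty J k y = t} : Set (Ty NC NR k))) :
            Set NC × (NR → Set (Ty NC NR k))) = ((A, f) : Set NC × (NR → Set (Ty NC NR k)))) ↔
          (({c | x ∈ J.ic c} : Set NC) = A ∧
            (fun r => ({t | ∃ y, (x, y) ∈ J.ir r ∧ ty J k y = t} : Set (Ty NC NR k))) = f)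
        from Prod.ext_iff]
      refine and_congr Iff.rfl ?_
      rw [funext_iff]
      refine forall_congr' fun r => ?_
      rw [Set.Subset.antisymm_iff]
      constructor
      · rintro ⟨h1, h2⟩
        constructor
        · rintro s ⟨y, hxy, rfl⟩
          exact h2 y hxy
        · intro s hsf
          obtain ⟨y, hxy, hty⟩ := h1 s hsf
          exact ⟨y, hxy, hty⟩
      · rintro ⟨hs, hy⟩
        refine ⟨fun s hsf => ?_, fun y hxy => ?_⟩
        · obtain ⟨y, hxy, hty⟩ := hy hsf
          exact ⟨y, hxy, hty⟩
        · exact hs ⟨y, hxy, rfl⟩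
/-- in a finite model, the rank-n type determines the type at every rank, for some n -/
lemma exists_stab {NC NR : Type} [Finite NC] [Finite NR] (U : ALCModel NC NR)
    (hU : Finite U.Δ) :
    ∃ n : ℕ, ∀ a b : U.Δ, ty U n a = ty U n b → ∀ k, ty U k a = ty U k b := by
  classical
  let g : ℕ → Set (U.Δ × U.Δ) := fun k => {p | ty U k p.1 = ty U k p.2}
  have hmono : ∀ {k l : ℕ}, k ≤ l → g l ⊆ g k := fun h p hp => ty_eq_of_le h hp
  obtain ⟨i, j, hne, hg⟩ := Finite.exists_ne_map_eq_of_infinite g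
  -- wlog i < j
  obtain ⟨n, m, hnm, hgnm⟩ : ∃ n m : ℕ, n < m ∧ g n = g m := by
    rcases lt_or_gt_of_ne hne with h | h
    · exact ⟨i, j, h, hg⟩
    · exact ⟨j, i, h, hg.symm⟩
  have hstep1 : ∀ a b : U.Δ, ty U n a = ty U n b → ty U (n+1) a = ty U (n+1) b := by
    intro a b hab
    have h1 : (a, b) ∈ g m := by rw [← hgnm]; exact hab
    exact hmono (Nat.succ_le_of_lt hnm) h1
  have hstep : ∀ k, n ≤ k → ∀ a b : U.Δ, ty U k a = ty U k b → ty U (k+1) a = ty U (k+1) b := by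
    intro k hk
    induction k, hk using Nat.le_induction with
    | base => exact hstep1
    | succ k hk IH =>
        intro a b hab
        refine ty_step_iff.mpr ⟨(ty_step_iff.mp hab).1, ?_⟩
        intro r
        ext s
        simp only [Set.mem_setOf_eq]
        constructor
        · rintro ⟨y, hy, rfl⟩
          have h1 : ty U k y ∈ {t | ∃ y', (b, y') ∈ U.ir r ∧ ty U k y' = t} := by
            rw [← (ty_step_iff.mp hab).2 r]; exact ⟨y, hy, rfl⟩
          obtain ⟨z, hz, hzk⟩ := h1
          exact ⟨z, hz, IH z y hzk⟩
        · rintro ⟨y, hy, rfl⟩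
          have h1 : ty U k y ∈ {t | ∃ y', (a, y') ∈ U.ir r ∧ ty U k y' = t} := by
            rw [(ty_step_iff.mp hab).2 r]; exact ⟨y, hy, rfl⟩
          obtain ⟨z, hz, hzk⟩ := h1
          exact ⟨z, hz, IH z y hzk⟩
  refine ⟨n, fun a b hab k => ?_⟩
  rcases le_or_gt k n with hk | hk
  · exact ty_eq_of_le hk hab
  · have : ∀ d : ℕ, ty U (n + d) a = ty U (n + d) b := by
      intro d
      induction d with
      | zero => exact hab
      | succ d IH => exact hstep (n + d) (Nat.le_add_right n d) a b IH
    have h2 := this (k - n)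
    rwa [Nat.add_sub_cancel' (Nat.le_of_lt hk)] at h2
/-- propagation of type agreement upward, given the one-step axioms hold -/
lemma ty_transfer {NC NR : Type} (U J : ALCModel NC NR) (n : ℕ)
    (hax : ∀ (x : J.Δ) (a : U.Δ), ty J n x = ty U n a → ty J (n+1) x = ty U (n+1) a) :
    ∀ (d : ℕ) (x : J.Δ) (a : U.Δ), ty J n x = ty U n a → ty J (n+d) x = ty U (n+d) a := by
  intro d
  induction d with
  | zero => exact fun x a h => h
  | succ d IH =>
      intro x a h
      have h1 : ty J (n+1) x = ty U (n+1) a := hax x a h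
      show ty J ((n+d)+1) x = ty U ((n+d)+1) a
      refine ty_step_iff.mpr ⟨ty_atoms_eq h, ?_⟩
      intro r
      ext s
      simp only [Set.mem_setOf_eq]
      constructor
      · rintro ⟨y, hy, rfl⟩
        have hmem : ty J n y ∈ {t | ∃ b, (a, b) ∈ U.ir r ∧ ty U n b = t} := by
          rw [← (ty_step_iff.mp h1).2 r]; exact ⟨y, hy, rfl⟩
        obtain ⟨b, hb, hbn⟩ := hmem
        exact ⟨b, hb, (IH y b hbn.symm).symm⟩
      · rintro ⟨b, hb, rfl⟩
        have hmem : ty U n b ∈ {t | ∃ y, (x, y) ∈ J.ir r ∧ ty J n y = t} := by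
          rw [(ty_step_iff.mp h1).2 r]; exact ⟨b, hb, rfl⟩
        obtain ⟨y, hy, hyn⟩ := hmem
        exact ⟨y, hy, IH y b hyn⟩
theorem finite_basis_for_finitely_generated_covariety {NC NR : Type}
    [Finite NC] [Finite NR] (K : Set (ALCModel NC NR)) (hK : K.Finite)
    (hfin : ∀ I ∈ K, Finite I.Δ) :
    ∃ T : Set (ALCConcept NC NR × ALCConcept NC NR), T.Finite ∧
      (∀ φ ∈ T, ∀ I ∈ CvGen K, I.Sat φ.1 φ.2) ∧
      (∀ C D : ALCConcept NC NR, (∀ I ∈ CvGen K, I.Sat C D) → Consequence T C D) := by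
  classical
  rcases K.eq_empty_or_nonempty with rfl | hne
  · -- empty case: the single axiom ⊤ ⊑ ⊥ works
    have hempty : IsCompleteCovariety (∅ : Set (ALCModel NC NR)) := by
      refine ⟨?_, ?_, ?_⟩
      · intro I I' h _; exact absurd h (Set.notMem_empty _)
      · intro I I' h _; exact absurd h (Set.notMem_empty _)
      · intro Λ hΛ F hF; exact absurd (hF (Classical.arbitrary Λ)) (Set.notMem_empty _)
    have hCv : CvGen (∅ : Set (ALCModel NC NR)) = ∅ := by
      apply Set.eq_empty_of_subset_empty
      intro I hI
      exact Set.mem_sInter.mp hI ∅ ⟨Set.empty_subset _, hempty⟩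
    refine ⟨{(.top, .bot)}, Set.finite_singleton _, ?_, ?_⟩
    · intro φ hφ I hI
      rw [hCv] at hI
      exact absurd hI (Set.notMem_empty _)
    · intro C D _ J hJ
      have hTB := hJ (.top, .bot) rfl
      obtain ⟨x⟩ := J.nonempty
      have hx : x ∈ J.eval .top := by simp [ALCModel.eval]
      have : x ∈ J.eval .bot := hTB hx
      simp [ALCModel.eval] at this
  · -- nonempty case
    haveI : Nonempty ↥K := hne.to_subtype
    obtain ⟨m, ⟨e⟩⟩ : ∃ m, Nonempty (↥K ≃ Fin m) := by
      haveI := hK.fintype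
      exact ⟨Fintype.card ↥K, ⟨Fintype.equivFin ↥K⟩⟩
    haveI : Nonempty (Fin m) := Nonempty.map e inferInstance
    set F : Fin m → ALCModel NC NR := fun j => (e.symm j).val with hFdef
    set U : ALCModel NC NR := Coproduct F with hUdef
    haveI hfinF : ∀ j : Fin m, Finite (F j).Δ := fun j => hfin (e.symm j).val (e.symm j).2
    have hUfin : Finite U.Δ := by
      show Finite (Σ j : Fin m, (F j).Δ)
      infer_instance
    haveI := hUfin
    obtain ⟨n, hstab⟩ := exists_stab U hUfin
    have hUmem : U ∈ CvGen K :=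
      (isCompleteCovariety_cvGen K).2.2 (Fin m) inferInstance F
        (fun j => subset_cvGen K (e.symm j).2)
    -- type transfer along coproduct injections
    have tytrans : ∀ (i : Fin m) (k : ℕ) (x : (F i).Δ),
        ty (F i) k x = ty U k ⟨i, x⟩ := by
      intro i k x
      have hmor := coproduct_inj_morphism F i
      have h1 : (⟨i, x⟩ : U.Δ) ∈ U.eval (chi k (ty U k ⟨i, x⟩)) :=
        (chi_eval k _ U _).mpr rfl
      exact (chi_eval k _ (F i) x).mp ((eval_morphism hmor (chi k (ty U k ⟨i, x⟩)) x).mpr h1)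
    refine ⟨(Set.range fun a : U.Δ => (chi n (ty U n a), chi (n+1) (ty U (n+1) a)))
        ∪ {(.top, bigSup ((enumList U.Δ).map (fun a => chi n (ty U n a))))},
      (Set.finite_range _).union (Set.finite_singleton _), ?_, ?_⟩
    · -- soundness
      intro φ hφ
      apply sat_cvGen_of_sat
      intro I hI
      set i : Fin m := e ⟨I, hI⟩ with hidef
      have hFi : F i = I := by
        rw [hFdef, hidef]
        simp
      rw [show I = F i from hFi.symm]
      rcases hφ with ⟨a, rfl⟩ | hφ
      · -- step axioms
        intro x hx
        have h1 : ty (F i) n x = ty U n a := (chi_eval n _ (F i) x).mp hx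
        have h2 : ty U n ⟨i, x⟩ = ty U n a := (tytrans i n x).symm.trans h1
        have h3 : ty U (n+1) ⟨i, x⟩ = ty U (n+1) a := hstab _ _ h2 (n+1)
        have h4 : ty (F i) (n+1) x = ty U (n+1) a := (tytrans i (n+1) x).trans h3
        exact (chi_eval (n+1) _ (F i) x).mpr h4
      · -- disjunction axiom
        rcases hφ with rfl
        intro x _
        rw [eval_bigSup]
        exact ⟨_, List.mem_map.mpr ⟨(⟨i, x⟩ : U.Δ), mem_enumList _, rfl⟩,
          (chi_eval n _ (F i) x).mpr (tytrans i n x)⟩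
    · -- completeness
      intro C D hCD J hJ
      have hax : ∀ (z : J.Δ) (a : U.Δ), ty J n z = ty U n a → ty J (n+1) z = ty U (n+1) a := by
        intro z a h
        have h1 : z ∈ J.eval (chi n (ty U n a)) := (chi_eval n _ J z).mpr h
        have h2 := hJ (chi n (ty U n a), chi (n+1) (ty U (n+1) a)) (Or.inl ⟨a, rfl⟩)
        exact (chi_eval (n+1) _ J z).mp (h2 h1)
      intro x hx
      -- anchor x to some element of U
      have htop := hJ (.top, bigSup ((enumList U.Δ).map (fun a => chi n (ty U n a))))
        (Or.inr rfl)
      have hxtop : x ∈ J.eval .top := by simp [ALCModel.eval]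
      obtain ⟨Cc, hCc, hxC⟩ := (eval_bigSup J x _).mp (htop hxtop)
      obtain ⟨a, -, rfl⟩ := List.mem_map.mp hCc
      have h0 : ty J n x = ty U n a := (chi_eval n _ J x).mp hxC
      have hall : ∀ k, ty J k x = ty U k a := by
        intro k
        rcases le_or_gt k n with hk | hk
        · exact ty_eq_of_le hk h0
        · have h2 := ty_transfer U J n hax (k - n) x a h0
          rwa [Nat.add_sub_cancel' (Nat.le_of_lt hk)] at h2
      have hUCD : U.Sat C D := hCD U hUmem
      have hC := eval_iff_of_ty_eq C (max (rankC C) (rankC D)) (le_max_left _ _) x a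
        (hall _)
      have hD := eval_iff_of_ty_eq D (max (rankC C) (rankC D)) (le_max_right _ _) x a
        (hall _)
      exact hD.mpr (hUCD (hC.mp hx))
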